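/- Let F : ℝ³ → ℝ be a C² function satisfying F(x₁,x₂,0) = (x₁-x₂)², F(0,x₂,x₃) = (x₂-x₃)², and F(x₁,0,x₃) = (x₁-x₃)². Then the function h(t) = F(t,t,t) satisfies h(0) = 0, h'(0) = 0, and h''(0) = -6. -/

import Mathlib

theorem stmt_2 (F : ℝ × ℝ × ℝ → ℝ) (hF : ContDiff ℝ 2 F)
    (h1 : ∀ x₁ x₂ : ℝ, F (x₁, x₂, 0) = (x₁ - x₂) ^ 2)
    (h2 : ∀ x₂ x₃ : ℝ, F (0, x₂, x₃) = (x₂ - x₃) ^ 2)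
    (h3 : ∀ x₁ x₃ : ℝ, F (x₁, 0, x₃) = (x₁ - x₃) ^ 2) :
    (fun t : ℝ => F (t, t, t)) 0 = 0 ∧
    deriv (fun t : ℝ => F (t, t, t)) 0 = 0 ∧
    deriv (deriv (fun t : ℝ => F (t, t, t))) 0 = -6 := by
  have hd : Differentiable ℝ F := hF.differentiable (by norm_num)
  have hd' : Differentiable ℝ (fderiv ℝ F) :=
    (hF.fderiv_right (m := 1) (by norm_num)).differentiable (by norm_num)
  -- derivative along a line through 0 with direction w
  have key1 : ∀ (w : ℝ × ℝ × ℝ) (t : ℝ),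
      HasDerivAt (fun s : ℝ => F (s • w)) (fderiv ℝ F (t • w) w) t := by
    intro w t
    have hline : HasDerivAt (fun s : ℝ => s • w) w t := by
      simpa using (hasDerivAt_id t).smul_const w
    simpa [Function.comp_def] using ((hd (t • w)).hasFDerivAt.comp_hasDerivAt t hline)
  have key2 : ∀ (w : ℝ × ℝ × ℝ),
      deriv (deriv (fun s : ℝ => F (s • w))) 0
        = fderiv ℝ (fderiv ℝ F) 0 w w := by
    intro w
    have hder : deriv (fun s : ℝ => F (s • w)) = fun t => fderiv ℝ F (t • w) w := by
      funext t; exact (key1 w t).deriv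
    rw [hder]
    have hline : HasDerivAt (fun s : ℝ => s • w) w 0 := by
      simpa using (hasDerivAt_id (0 : ℝ)).smul_const w
    have h2' : HasDerivAt (fun t : ℝ => fderiv ℝ F (t • w))
        (fderiv ℝ (fderiv ℝ F) 0 w) 0 := by
      have := ((hd' ((0 : ℝ) • w)).hasFDerivAt.comp_hasDerivAt 0 hline)
      simpa [Function.comp_def] using this
    have h3' : HasDerivAt (fun t : ℝ => fderiv ℝ F (t • w) w)
        (fderiv ℝ (fderiv ℝ F) 0 w w) 0 := by
      simpa using h2'.clm_apply (hasDerivAt_const 0 w)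
    exact h3'.deriv
  have hsm : ∀ (s a b c : ℝ), s • ((a, b, c) : ℝ × ℝ × ℝ) = (s * a, s * b, s * c) :=
    fun s a b c => rfl
  set B := fderiv ℝ (fderiv ℝ F) 0 with hB
  -- the six line restrictions
  have fe1 : (fun s : ℝ => F (s • ((1:ℝ), (0:ℝ), (0:ℝ)))) = fun s => s ^ 2 := by
    funext s; rw [hsm]; simp only [mul_one, mul_zero]; rw [h1]; ring
  have fe2 : (fun s : ℝ => F (s • ((0:ℝ), (1:ℝ), (0:ℝ)))) = fun s => s ^ 2 := by
    funext s; rw [hsm]; simp only [mul_one, mul_zero]; rw [h2]; ring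
  have fe3 : (fun s : ℝ => F (s • ((0:ℝ), (0:ℝ), (1:ℝ)))) = fun s => s ^ 2 := by
    funext s; rw [hsm]; simp only [mul_one, mul_zero]; rw [h2]; ring
  have fe12 : (fun s : ℝ => F (s • ((1:ℝ), (1:ℝ), (0:ℝ)))) = fun _ => (0:ℝ) := by
    funext s; rw [hsm]; simp only [mul_one, mul_zero]; rw [h1]; ring
  have fe23 : (fun s : ℝ => F (s • ((0:ℝ), (1:ℝ), (1:ℝ)))) = fun _ => (0:ℝ) := by
    funext s; rw [hsm]; simp only [mul_one, mul_zero]; rw [h2]; ring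
  have fe13 : (fun s : ℝ => F (s • ((1:ℝ), (0:ℝ), (1:ℝ)))) = fun _ => (0:ℝ) := by
    funext s; rw [hsm]; simp only [mul_one, mul_zero]; rw [h3]; ring
  have dsq : deriv (deriv (fun s : ℝ => s ^ 2)) 0 = 2 := by
    have : deriv (fun s : ℝ => s ^ 2) = fun s => 2 * s := by
      funext s; simp [deriv_pow]
    rw [this]
    simpa using ((hasDerivAt_id (0:ℝ)).const_mul 2).deriv
  have dz : deriv (deriv (fun _ : ℝ => (0:ℝ))) 0 = 0 := by simp
  have q1 : B (1, 0, 0) (1, 0, 0) = 2 := by rw [← key2, fe1, dsq]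
  have q2 : B (0, 1, 0) (0, 1, 0) = 2 := by rw [← key2, fe2, dsq]
  have q3 : B (0, 0, 1) (0, 0, 1) = 2 := by rw [← key2, fe3, dsq]
  have q12 : B (1, 1, 0) (1, 1, 0) = 0 := by rw [← key2, fe12, dz]
  have q23 : B (0, 1, 1) (0, 1, 1) = 0 := by rw [← key2, fe23, dz]
  have q13 : B (1, 0, 1) (1, 0, 1) = 0 := by rw [← key2, fe13, dz]
  -- expand sums of basis vectors
  have s12 : ((1:ℝ), (1:ℝ), (0:ℝ)) = ((1:ℝ), (0:ℝ), (0:ℝ)) + ((0:ℝ), (1:ℝ), (0:ℝ)) := by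
    simp [Prod.ext_iff]
  have s23 : ((0:ℝ), (1:ℝ), (1:ℝ)) = ((0:ℝ), (1:ℝ), (0:ℝ)) + ((0:ℝ), (0:ℝ), (1:ℝ)) := by
    simp [Prod.ext_iff]
  have s13 : ((1:ℝ), (0:ℝ), (1:ℝ)) = ((1:ℝ), (0:ℝ), (0:ℝ)) + ((0:ℝ), (0:ℝ), (1:ℝ)) := by
    simp [Prod.ext_iff]
  have s123 : ((1:ℝ), (1:ℝ), (1:ℝ)) =
      ((1:ℝ), (0:ℝ), (0:ℝ)) + ((0:ℝ), (1:ℝ), (0:ℝ)) + ((0:ℝ), (0:ℝ), (1:ℝ)) := by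
    simp [Prod.ext_iff]
  have expand : ∀ a b : ℝ × ℝ × ℝ, B (a + b) (a + b) = B a a + B a b + B b a + B b b := by
    intro a b
    simp [map_add, ContinuousLinearMap.add_apply]
    ring
  have c12 : B (1,0,0) (0,1,0) + B (0,1,0) (1,0,0) = -4 := by
    have := q12; rw [s12, expand] at this; linarith
  have c23 : B (0,1,0) (0,0,1) + B (0,0,1) (0,1,0) = -4 := by
    have := q23; rw [s23, expand] at this; linarith
  have c13 : B (1,0,0) (0,0,1) + B (0,0,1) (1,0,0) = -4 := by
    have := q13; rw [s13, expand] at this; linarith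
  have qv : B (1, 1, 1) (1, 1, 1) = -6 := by
    rw [s123]
    simp only [map_add, ContinuousLinearMap.add_apply]
    linarith
  -- value at 0
  have hval : (fun t : ℝ => F (t, t, t)) 0 = 0 := by simpa using h1 0 0
  -- rewrite diagonal as a line
  have hdiag : (fun t : ℝ => F (t, t, t)) = fun t : ℝ => F (t • ((1:ℝ), (1:ℝ), (1:ℝ))) := by
    funext t; rw [hsm, mul_one]
  -- first derivative
  have g1 : fderiv ℝ F 0 (1, 0, 0) = 0 := by
    have := (key1 ((1:ℝ), (0:ℝ), (0:ℝ)) 0).deriv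
    rw [fe1] at this; simpa using this.symm
  have g2 : fderiv ℝ F 0 (0, 1, 0) = 0 := by
    have := (key1 ((0:ℝ), (1:ℝ), (0:ℝ)) 0).deriv
    rw [fe2] at this; simpa using this.symm
  have g3 : fderiv ℝ F 0 (0, 0, 1) = 0 := by
    have := (key1 ((0:ℝ), (0:ℝ), (1:ℝ)) 0).deriv
    rw [fe3] at this; simpa using this.symm
  have hderiv0 : deriv (fun t : ℝ => F (t, t, t)) 0 = 0 := by
    rw [hdiag]
    have := (key1 ((1:ℝ), (1:ℝ), (1:ℝ)) 0).deriv
    rw [this]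
    rw [zero_smul, s123]
    simp only [map_add, g1, g2, g3]
    norm_num
  refine ⟨hval, hderiv0, ?_⟩
  rw [hdiag, key2]; exact qv
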